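/- Let p be an odd prime, a ∈ Z a quadratic non-residue mod p, and f(x) = x_1² − a x_2² − p x_3² + a p x_4². Let U = {x ∈ Z_p⁴ : ‖x‖_p = 1}. Then for every α ∈ C, ∫_U |f(x)|_p^{α−2} d⁴x = (1 − p^{−2})(1 + p^{−α}). -/

import Mathlib

open MeasureTheory Complex Classical Filter

variable (p : ℕ) [Fact p.Prime]

noncomputable instance : MeasurableSpace ℚ_[p] := borel _
instance : BorelSpace ℚ_[p] := ⟨rfl⟩
noncomputable instance (n : ℕ) : MeasurableSpace (Fin n → ℚ_[p]) := borel _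
instance (n : ℕ) : BorelSpace (Fin n → ℚ_[p]) := ⟨rfl⟩

/-- Haar measure on `ℚ_p` normalized so that `ℤ_p` (the closed unit ball) has measure 1. -/
noncomputable def haarQ : Measure ℚ_[p] :=
  Measure.addHaarMeasure ⟨⟨Metric.closedBall 0 1, isCompact_closedBall 0 1⟩,
    ⟨0, mem_interior_iff_mem_nhds.2 (Metric.closedBall_mem_nhds 0 one_pos)⟩⟩

/-- Haar measure on `ℚ_p^n` normalized so that `ℤ_p^n` has measure 1. -/
noncomputable def haarQn (n : ℕ) : Measure (Fin n → ℚ_[p]) :=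
  Measure.addHaarMeasure ⟨⟨Metric.closedBall 0 1, isCompact_closedBall 0 1⟩,
    ⟨0, mem_interior_iff_mem_nhds.2 (Metric.closedBall_mem_nhds 0 one_pos)⟩⟩

/-- The p-adic fractional part of `x` : the unique rational of the form `z / p^n`
lying in `[0,1)` with `x - r ∈ ℤ_p`. -/
noncomputable def padicFract (x : ℚ_[p]) : ℚ :=
  if h : ∃ r : ℚ, (∃ (z : ℤ) (n : ℕ), r = (z : ℚ) / (p : ℚ) ^ n) ∧ 0 ≤ r ∧ r < 1 ∧
      ‖x - (r : ℚ_[p])‖ ≤ 1 then h.choose else 0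

/-- The standard additive character `χ(y) = exp(2 π i {y}_p)` of `ℚ_p`. -/
noncomputable def stdChar (y : ℚ_[p]) : ℂ :=
  Complex.exp (2 * Real.pi * Complex.I * (padicFract p y : ℂ))

/-- A Bruhat–Schwartz (test) function: locally constant with compact support. -/
def IsBruhatSchwartz {E : Type*} [TopologicalSpace E] (φ : E → ℂ) : Prop :=
  IsLocallyConstant φ ∧ HasCompactSupport φ

/-- Fourier transform on `ℚ_p`. -/
noncomputable def fourier1 (φ : ℚ_[p] → ℂ) (ξ : ℚ_[p]) : ℂ :=
  ∫ x, stdChar p (-(ξ * x)) * φ x ∂haarQ p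

/-- Fourier transform on `ℚ_p^n`. -/
noncomputable def fourierN (n : ℕ) (φ : (Fin n → ℚ_[p]) → ℂ) (ξ : Fin n → ℚ_[p]) : ℂ :=
  ∫ x, stdChar p (-(∑ i, ξ i * x i)) * φ x ∂haarQn p n

/-- Inverse Fourier transform on `ℚ_p^n`. -/
noncomputable def fourierInvN (n : ℕ) (φ : (Fin n → ℚ_[p]) → ℂ) (x : Fin n → ℚ_[p]) : ℂ :=
  ∫ ξ, stdChar p (∑ i, x i * ξ i) * φ ξ ∂haarQn p n

/-- The elliptic quadratic form `f(x) = x₁² - a x₂² - p x₃² + a p x₄²`. -/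
noncomputable def Qf (a : ℤ) (x : Fin 4 → ℚ_[p]) : ℚ_[p] :=
  x 0 ^ 2 - (a : ℚ_[p]) * x 1 ^ 2 - (p : ℚ_[p]) * x 2 ^ 2 + (a : ℚ_[p]) * (p : ℚ_[p]) * x 3 ^ 2

/-- The dual elliptic quadratic form `f°(x) = a p x₁² - p x₂² - a x₃² + x₄²`. -/
noncomputable def QfCirc (a : ℤ) (x : Fin 4 → ℚ_[p]) : ℚ_[p] :=
  (a : ℚ_[p]) * (p : ℚ_[p]) * x 0 ^ 2 - (p : ℚ_[p]) * x 1 ^ 2 - (a : ℚ_[p]) * x 2 ^ 2 + x 3 ^ 2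

/-! ### Auxiliary machinery for the computation -/

section AuxRes
variable (p : ℕ) [Fact p.Prime]

private def toZp (x : ℚ_[p]) (h : ‖x‖ ≤ 1) : ℤ_[p] := ⟨x, h⟩

@[simp] private lemma toZp_coe (x : ℚ_[p]) (h : ‖x‖ ≤ 1) :
    ((toZp p x h : ℤ_[p]) : ℚ_[p]) = x := rfl

/-- residue of a p-adic number of norm ≤ 1 -/
private noncomputable def resQ (x : ℚ_[p]) : ZMod p :=
  if h : ‖x‖ ≤ 1 then PadicInt.toZMod (toZp p x h) else 0

private lemma natCast_norm_le_one (n : ℕ) : ‖(n : ℚ_[p])‖ ≤ 1 := by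
  have := Padic.norm_int_le_one (p := p) (n : ℤ)
  push_cast at this
  exact this

private lemma one_lt_pR : (1 : ℝ) < (p : ℝ) := by
  exact_mod_cast (Fact.out : p.Prime).one_lt

private lemma p_inv_pos : (0 : ℝ) < (p : ℝ)⁻¹ :=
  inv_pos.2 (lt_trans one_pos (one_lt_pR p))

private lemma p_inv_lt_one : (p : ℝ)⁻¹ < 1 :=
  inv_lt_one_of_one_lt₀ (one_lt_pR p)

private lemma mem_max_iff {z : ℤ_[p]} :
    z ∈ IsLocalRing.maximalIdeal ℤ_[p] ↔ ‖z‖ ≤ (p : ℝ)⁻¹ := by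
  rw [PadicInt.maximalIdeal_eq_span_p,
    show ((p : ℤ_[p]) = (p : ℤ_[p]) ^ (1 : ℕ)) from (pow_one _).symm,
    ← PadicInt.norm_le_pow_iff_mem_span_pow]
  norm_num

private lemma resQ_char {u : ℚ_[p]} (hu : ‖u‖ ≤ 1) {w : ZMod p}
    (h : ‖u - ((w.val : ℕ) : ℚ_[p])‖ ≤ (p : ℝ)⁻¹) : resQ p u = w := by
  haveI : NeZero p := ⟨(Fact.out : p.Prime).ne_zero⟩
  rw [resQ, dif_pos hu]
  have hz : (toZp p u hu - ((w.val : ℕ) : ℤ_[p])) ∈ IsLocalRing.maximalIdeal ℤ_[p] := by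
    rw [mem_max_iff, PadicInt.norm_def]
    push_cast
    exact h
  have h2 : PadicInt.toZMod (toZp p u hu - ((w.val : ℕ) : ℤ_[p])) = 0 := by
    rw [← RingHom.mem_ker, PadicInt.ker_toZMod]; exact hz
  rw [map_sub, sub_eq_zero] at h2
  rw [h2, map_natCast, ZMod.natCast_val, ZMod.cast_id]

private lemma resQ_spec {u : ℚ_[p]} (hu : ‖u‖ ≤ 1) :
    ‖u - (((resQ p u).val : ℕ) : ℚ_[p])‖ ≤ (p : ℝ)⁻¹ := by
  haveI : NeZero p := ⟨(Fact.out : p.Prime).ne_zero⟩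
  rw [resQ, dif_pos hu]
  have := PadicInt.toZMod_spec (toZp p u hu)
  rw [mem_max_iff, PadicInt.norm_def, ← ZMod.natCast_val] at this
  push_cast at this ⊢
  exact this

private lemma resQ_eq_zero_iff {u : ℚ_[p]} (hu : ‖u‖ ≤ 1) :
    resQ p u = 0 ↔ ‖u‖ ≤ (p : ℝ)⁻¹ := by
  constructor
  · intro h
    have := resQ_spec p hu
    rw [h] at this
    simpa using this
  · intro h
    exact resQ_char p hu (by simpa using h)

private lemma norm_eq_one_of_resQ_ne {u : ℚ_[p]} (hu : ‖u‖ ≤ 1) (h : resQ p u ≠ 0) :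
    ‖u‖ = 1 := by
  rcases lt_or_eq_of_le hu with h1 | h1
  · exfalso
    apply h
    rw [resQ_eq_zero_iff p hu, show ‖u‖ = ‖toZp p u hu‖ from rfl, ← mem_max_iff,
      PadicInt.maximalIdeal_eq_span_p]
    refine Ideal.mem_span_singleton.2 ?_
    rw [← PadicInt.norm_lt_one_iff_dvd]
    exact h1
  · exact h1

private lemma zmod_key {a : ℤ} (ha : ¬ IsSquare ((a : ZMod p))) {A B : ZMod p}
    (hAB : A ≠ 0 ∨ B ≠ 0) : A ^ 2 - (a : ZMod p) * B ^ 2 ≠ 0 := by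
  intro h
  rw [sub_eq_zero] at h
  by_cases hB : B = 0
  · have hA : A ≠ 0 := hAB.resolve_right (by simp [hB])
    apply hA
    have h2 : A ^ 2 = 0 := by rw [h, hB]; ring
    exact pow_eq_zero_iff (by norm_num : (2:ℕ) ≠ 0) |>.1 h2
  · apply ha
    refine ⟨A / B, ?_⟩
    field_simp
    linear_combination -h

private lemma unit_norm {a : ℤ} (ha : ¬ IsSquare ((a : ZMod p))) {u w : ℚ_[p]}
    (hu : ‖u‖ ≤ 1) (hw : ‖w‖ ≤ 1) (h : resQ p u ≠ 0 ∨ resQ p w ≠ 0) :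
    ‖u ^ 2 - (a : ℚ_[p]) * w ^ 2‖ = 1 := by
  set Z : ℤ_[p] := toZp p u hu ^ 2 - (a : ℤ_[p]) * toZp p w hw ^ 2 with hZ
  have hcoe : ((Z : ℤ_[p]) : ℚ_[p]) = u ^ 2 - (a : ℚ_[p]) * w ^ 2 := by
    rw [hZ]; push_cast; simp
  rw [← hcoe, ← PadicInt.norm_def]
  have hle := PadicInt.norm_le_one Z
  rcases lt_or_eq_of_le hle with h1 | h1
  · exfalso
    rw [PadicInt.norm_lt_one_iff_dvd, ← Ideal.mem_span_singleton,
      ← PadicInt.maximalIdeal_eq_span_p, ← PadicInt.ker_toZMod, RingHom.mem_ker] at h1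
    have hmap : PadicInt.toZMod Z =
        (PadicInt.toZMod (toZp p u hu)) ^ 2 -
          (a : ZMod p) * (PadicInt.toZMod (toZp p w hw)) ^ 2 := by
      rw [hZ]; simp [map_sub, map_mul, map_pow, map_intCast]
    rw [hmap] at h1
    have hru : resQ p u = PadicInt.toZMod (toZp p u hu) := by rw [resQ, dif_pos hu]
    have hrw : resQ p w = PadicInt.toZMod (toZp p w hw) := by rw [resQ, dif_pos hw]
    exact zmod_key p ha (by rw [← hru, ← hrw]; exact h) h1
  · exact h1

private lemma norm_sub_le_max (a b : ℚ_[p]) : ‖a - b‖ ≤ max ‖a‖ ‖b‖ := by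
  rw [sub_eq_add_neg]
  simpa using Padic.nonarchimedean a (-b)

private lemma norm_sub_eq_left {a b : ℚ_[p]} (h : ‖b‖ < ‖a‖) : ‖a - b‖ = ‖a‖ := by
  rw [sub_eq_add_neg, Padic.add_eq_max_of_ne (by rw [norm_neg]; exact ne_of_gt h),
    norm_neg, max_eq_left h.le]

private lemma norm_sub_eq_right {a b : ℚ_[p]} (h : ‖a‖ < ‖b‖) : ‖a - b‖ = ‖b‖ := by
  rw [sub_eq_add_neg, Padic.add_eq_max_of_ne (by rw [norm_neg]; exact ne_of_lt h),
    norm_neg, max_eq_right h.le]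

private lemma Qf_eq (a : ℤ) (x : Fin 4 → ℚ_[p]) :
    Qf p a x = (x 0 ^ 2 - (a : ℚ_[p]) * x 1 ^ 2) -
      (p : ℚ_[p]) * (x 2 ^ 2 - (a : ℚ_[p]) * x 3 ^ 2) := by
  rw [Qf]; ring

private lemma norm_sq_pair_le_one (a : ℤ) (u w : ℚ_[p]) (hu : ‖u‖ ≤ 1) (hw : ‖w‖ ≤ 1) :
    ‖u ^ 2 - (a : ℚ_[p]) * w ^ 2‖ ≤ 1 := by
  refine (norm_sub_le_max p _ _).trans (max_le ?_ ?_)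
  · rw [norm_pow]
    exact pow_le_one₀ (norm_nonneg _) hu |>.trans le_rfl
  · rw [norm_mul, norm_pow]
    have h1 : ‖(a : ℚ_[p])‖ ≤ 1 := Padic.norm_int_le_one a
    have h2 : ‖w‖ ^ 2 ≤ 1 := pow_le_one₀ (norm_nonneg _) hw
    calc ‖(a : ℚ_[p])‖ * ‖w‖ ^ 2 ≤ 1 * 1 :=
      mul_le_mul h1 h2 (by positivity) zero_le_one
    _ = 1 := by ring

private lemma norm_Qf_one {a : ℤ} (ha : ¬ IsSquare ((a : ZMod p))) {x : Fin 4 → ℚ_[p]}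
    (hx : ∀ i, ‖x i‖ ≤ 1) (h01 : resQ p (x 0) ≠ 0 ∨ resQ p (x 1) ≠ 0) :
    ‖Qf p a x‖ = 1 := by
  have hA : ‖x 0 ^ 2 - (a : ℚ_[p]) * x 1 ^ 2‖ = 1 := unit_norm p ha (hx 0) (hx 1) h01
  have hB : ‖(p : ℚ_[p]) * (x 2 ^ 2 - (a : ℚ_[p]) * x 3 ^ 2)‖ < 1 := by
    rw [norm_mul, Padic.norm_p]
    calc (p : ℝ)⁻¹ * ‖x 2 ^ 2 - (a : ℚ_[p]) * x 3 ^ 2‖ ≤ (p : ℝ)⁻¹ * 1 :=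
      mul_le_mul_of_nonneg_left (norm_sq_pair_le_one p a _ _ (hx 2) (hx 3)) (p_inv_pos p).le
    _ < 1 := by rw [mul_one]; exact p_inv_lt_one p
  rw [Qf_eq, norm_sub_eq_left p (by rw [hA]; exact hB), hA]

private lemma norm_Qf_pinv {a : ℤ} (ha : ¬ IsSquare ((a : ZMod p))) {x : Fin 4 → ℚ_[p]}
    (hx : ∀ i, ‖x i‖ ≤ 1) (h0 : resQ p (x 0) = 0) (h1 : resQ p (x 1) = 0)
    (h23 : resQ p (x 2) ≠ 0 ∨ resQ p (x 3) ≠ 0) :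
    ‖Qf p a x‖ = (p : ℝ)⁻¹ := by
  have hB : ‖(p : ℚ_[p]) * (x 2 ^ 2 - (a : ℚ_[p]) * x 3 ^ 2)‖ = (p : ℝ)⁻¹ := by
    rw [norm_mul, Padic.norm_p, unit_norm p ha (hx 2) (hx 3) h23, mul_one]
  have hx0 : ‖x 0‖ ≤ (p : ℝ)⁻¹ := (resQ_eq_zero_iff p (hx 0)).1 h0
  have hx1 : ‖x 1‖ ≤ (p : ℝ)⁻¹ := (resQ_eq_zero_iff p (hx 1)).1 h1
  have hA : ‖x 0 ^ 2 - (a : ℚ_[p]) * x 1 ^ 2‖ ≤ (p : ℝ)⁻¹ * (p : ℝ)⁻¹ := by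
    refine (norm_sub_le_max p _ _).trans (max_le ?_ ?_)
    · rw [norm_pow, sq]
      exact mul_le_mul hx0 hx0 (norm_nonneg _) (p_inv_pos p).le
    · rw [norm_mul, norm_pow, sq]
      calc ‖(a : ℚ_[p])‖ * (‖x 1‖ * ‖x 1‖) ≤ 1 * ((p : ℝ)⁻¹ * (p : ℝ)⁻¹) := by
            refine mul_le_mul (Padic.norm_int_le_one a) ?_ (by positivity) zero_le_one
            exact mul_le_mul hx1 hx1 (norm_nonneg _) (p_inv_pos p).le
        _ = (p : ℝ)⁻¹ * (p : ℝ)⁻¹ := by ring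
  have hlt : ‖x 0 ^ 2 - (a : ℚ_[p]) * x 1 ^ 2‖ <
      ‖(p : ℚ_[p]) * (x 2 ^ 2 - (a : ℚ_[p]) * x 3 ^ 2)‖ := by
    rw [hB]
    exact hA.trans_lt (mul_lt_of_lt_one_left (p_inv_pos p) (p_inv_lt_one p))
  rw [Qf_eq, norm_sub_eq_right p hlt, hB]

end AuxRes

section AuxSets
variable (p : ℕ) [Fact p.Prime]

private noncomputable def cvec (v : Fin 4 → ZMod p) : Fin 4 → ℚ_[p] :=
  fun i => (((v i).val : ℕ) : ℚ_[p])

private def coset (v : Fin 4 → ZMod p) : Set (Fin 4 → ℚ_[p]) :=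
  Metric.closedBall (cvec p v) ((p : ℝ)⁻¹)

private lemma mem_coset_iff {v : Fin 4 → ZMod p} {x : Fin 4 → ℚ_[p]} :
    x ∈ coset p v ↔ ∀ i, ‖x i - cvec p v i‖ ≤ (p : ℝ)⁻¹ := by
  rw [coset, Metric.mem_closedBall, dist_eq_norm,
    pi_norm_le_iff_of_nonneg (p_inv_pos p).le]
  simp [Pi.sub_apply]

private lemma coset_norm_le {v : Fin 4 → ZMod p} {x : Fin 4 → ℚ_[p]}
    (hx : x ∈ coset p v) (i : Fin 4) : ‖x i‖ ≤ 1 := by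
  have h1 := (mem_coset_iff p).1 hx i
  have : x i = (x i - cvec p v i) + cvec p v i := by ring
  rw [this]
  refine (Padic.nonarchimedean _ _).trans (max_le ?_ ?_)
  · exact h1.trans (p_inv_lt_one p).le
  · exact natCast_norm_le_one p _

private lemma coset_resQ {v : Fin 4 → ZMod p} {x : Fin 4 → ℚ_[p]}
    (hx : x ∈ coset p v) (i : Fin 4) : resQ p (x i) = v i :=
  resQ_char p (coset_norm_le p hx i) ((mem_coset_iff p).1 hx i)

private lemma U_eq : {x : Fin 4 → ℚ_[p] | ‖x‖ = 1} =
    ⋃ v ∈ Finset.univ.erase (0 : Fin 4 → ZMod p), coset p v := by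
  ext x
  simp only [Set.mem_setOf_eq, Set.mem_iUnion, Finset.mem_erase, Finset.mem_univ, and_true,
    exists_prop]
  constructor
  · intro hx
    have hxi : ∀ i, ‖x i‖ ≤ 1 := fun i => (norm_le_pi_norm x i).trans hx.le
    refine ⟨fun i => resQ p (x i), ?_, ?_⟩
    · intro h0
      have hall : ∀ i, ‖x i‖ ≤ (p : ℝ)⁻¹ := by
        intro i
        have : resQ p (x i) = 0 := congrFun h0 i
        exact (resQ_eq_zero_iff p (hxi i)).1 this
      have : ‖x‖ ≤ (p : ℝ)⁻¹ := (pi_norm_le_iff_of_nonneg (p_inv_pos p).le).2 hall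
      rw [hx] at this
      exact absurd this (not_le.2 (p_inv_lt_one p))
    · exact (mem_coset_iff p).2 fun i => resQ_spec p (hxi i)
  · rintro ⟨v, hv0, hxv⟩
    have h1 : ∀ i, ‖x i‖ ≤ 1 := coset_norm_le p hxv
    obtain ⟨i0, hi0⟩ : ∃ i, v i ≠ 0 := by
      by_contra hall
      push_neg at hall
      exact hv0 (funext hall)
    have h2 : ‖x i0‖ = 1 :=
      norm_eq_one_of_resQ_ne p (h1 i0) (by rw [coset_resQ p hxv i0]; exact hi0)
    exact le_antisymm ((pi_norm_le_iff_of_nonneg zero_le_one).2 h1)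
      (h2 ▸ norm_le_pi_norm x i0)

private lemma coset_disjoint {v w : Fin 4 → ZMod p} (hvw : v ≠ w) :
    Disjoint (coset p v) (coset p w) := by
  rw [Set.disjoint_left]
  intro x hv hw
  apply hvw
  funext i
  rw [← coset_resQ p hv i, ← coset_resQ p hw i]

private lemma ball_eq_union : Metric.closedBall (0 : Fin 4 → ℚ_[p]) 1 =
    ⋃ v ∈ (Finset.univ : Finset (Fin 4 → ZMod p)), coset p v := by
  ext x
  simp only [Metric.mem_closedBall, dist_zero_right, Set.mem_iUnion, Finset.mem_univ,
    exists_prop, true_and]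
  constructor
  · intro hx
    have hxi : ∀ i, ‖x i‖ ≤ 1 := fun i => (norm_le_pi_norm x i).trans hx
    exact ⟨fun i => resQ p (x i), (mem_coset_iff p).2 fun i => resQ_spec p (hxi i)⟩
  · rintro ⟨v, hv⟩
    exact (pi_norm_le_iff_of_nonneg zero_le_one).2 (coset_norm_le p hv)

private lemma measure_coset (v : Fin 4 → ZMod p) :
    haarQn p 4 (coset p v) = ((p : ENNReal) ^ 4)⁻¹ := by
  haveI : NeZero p := ⟨(Fact.out : p.Prime).ne_zero⟩
  haveI hinv : (haarQn p 4).IsAddLeftInvariant := by unfold haarQn; infer_instance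
  have htrans : ∀ w : Fin 4 → ZMod p, haarQn p 4 (coset p w) = haarQn p 4 (coset p 0) := by
    intro w
    have hpre : (fun x => cvec p w + x) ⁻¹' coset p w = coset p 0 := by
      ext y
      simp only [Set.mem_preimage, coset, Metric.mem_closedBall, dist_eq_norm]
      have h0 : cvec p 0 = 0 := by funext i; simp [cvec]
      rw [h0, add_sub_cancel_left, sub_zero]
    rw [← hpre, measure_preimage_add]
  have hms : ∀ v ∈ (Finset.univ : Finset (Fin 4 → ZMod p)), MeasurableSet (coset p v) := by
    intro v _
    show MeasurableSet (Metric.closedBall _ _)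
    exact measurableSet_closedBall
  have hd : Set.PairwiseDisjoint ↑(Finset.univ : Finset (Fin 4 → ZMod p)) (coset p) :=
    fun v _ w _ hvw => coset_disjoint p hvw
  have hsum : ∑ v : (Fin 4 → ZMod p), haarQn p 4 (coset p v) = 1 := by
    rw [← measure_biUnion_finset hd hms, ← ball_eq_union]
    exact MeasureTheory.Measure.addHaarMeasure_self
  simp_rw [htrans] at hsum
  rw [Finset.sum_const, Finset.card_univ] at hsum
  have hcard : Fintype.card (Fin 4 → ZMod p) = p ^ 4 := by
    rw [Fintype.card_fun, ZMod.card, Fintype.card_fin]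
  rw [hcard, nsmul_eq_mul] at hsum
  have hp0 : ((p : ENNReal) ^ 4) ≠ 0 := by
    simp [pow_ne_zero, Nat.cast_ne_zero, (Fact.out : p.Prime).ne_zero]
  have hpt : ((p : ENNReal) ^ 4) ≠ ⊤ := by simp
  have hcast : ((p ^ 4 : ℕ) : ENNReal) = (p : ENNReal) ^ 4 := by push_cast; ring
  rw [hcast] at hsum
  rw [htrans v]
  calc haarQn p 4 (coset p 0)
      = ((p : ENNReal) ^ 4)⁻¹ * ((p : ENNReal) ^ 4 * haarQn p 4 (coset p 0)) := by
        rw [← mul_assoc, ENNReal.inv_mul_cancel hp0 hpt, one_mul]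
    _ = ((p : ENNReal) ^ 4)⁻¹ := by rw [hsum, mul_one]

end AuxSets

/-- For every `α ∈ ℂ`, `∫_U |f(x)|_p^{α-2} d⁴x = (1 - p^{-2})(1 + p^{-α})`, where
`U = {x ∈ ℤ_p⁴ : ‖x‖_p = 1}`. -/
theorem integral_over_units (p : ℕ) [Fact p.Prime] (hp : p ≠ 2)
    (a : ℤ) (ha : legendreSym p a = -1) (α : ℂ) :
    ∫ x in {x : Fin 4 → ℚ_[p] | ‖x‖ = 1}, ((‖Qf p a x‖ : ℂ) ^ (α - 2)) ∂haarQn p 4 =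
      (1 - (p : ℂ) ^ (-(2 : ℂ))) * (1 + (p : ℂ) ^ (-α)) := by
  classical
  haveI : NeZero p := ⟨(Fact.out : p.Prime).ne_zero⟩
  have ha' : ¬ IsSquare ((a : ZMod p)) := (legendreSym.eq_neg_one_iff p).1 ha
  set q : ℂ := (((p : ℝ)⁻¹ : ℝ) : ℂ) ^ (α - 2) with hq
  -- value of the integrand on each coset
  have hval : ∀ v : Fin 4 → ZMod p, v ≠ 0 → ∀ x ∈ coset p v,
      ((‖Qf p a x‖ : ℂ) ^ (α - 2)) = (if v 0 = 0 ∧ v 1 = 0 then q else 1) := by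
    intro v hv x hx
    have hxi : ∀ i, ‖x i‖ ≤ 1 := coset_norm_le p hx
    by_cases h01 : v 0 = 0 ∧ v 1 = 0
    · have h23 : v 2 ≠ 0 ∨ v 3 ≠ 0 := by
        by_contra hc
        push_neg at hc
        apply hv
        funext i
        fin_cases i
        · exact h01.1
        · exact h01.2
        · exact hc.1
        · exact hc.2
      have hnv := norm_Qf_pinv p ha' hxi
        (by rw [coset_resQ p hx 0]; exact h01.1)
        (by rw [coset_resQ p hx 1]; exact h01.2)
        (by rcases h23 with h | h
            · exact Or.inl (by rw [coset_resQ p hx 2]; exact h)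
            · exact Or.inr (by rw [coset_resQ p hx 3]; exact h))
      rw [hnv, if_pos h01, hq]
    · have h01' : resQ p (x 0) ≠ 0 ∨ resQ p (x 1) ≠ 0 := by
        rw [coset_resQ p hx 0, coset_resQ p hx 1]
        exact not_and_or.1 h01
      rw [norm_Qf_one p ha' hxi h01', if_neg h01]
      simp
  -- decompose the integral
  rw [U_eq p]
  have hms : ∀ v ∈ Finset.univ.erase (0 : Fin 4 → ZMod p), MeasurableSet (coset p v) := by
    intro v _
    show MeasurableSet (Metric.closedBall _ _)
    exact measurableSet_closedBall
  have hd : Set.Pairwise ↑(Finset.univ.erase (0 : Fin 4 → ZMod p)) (Function.onFun Disjoint (coset p)) :=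
    fun v _ w _ hvw => coset_disjoint p hvw
  have hfin : ∀ v : Fin 4 → ZMod p, haarQn p 4 (coset p v) < ⊤ := by
    intro v
    rw [measure_coset]
    simp [ENNReal.inv_lt_top, pos_iff_ne_zero, pow_ne_zero, Nat.cast_ne_zero,
      (Fact.out : p.Prime).ne_zero]
  have hint : ∀ v ∈ Finset.univ.erase (0 : Fin 4 → ZMod p),
      IntegrableOn (fun x => ((‖Qf p a x‖ : ℂ) ^ (α - 2))) (coset p v) (haarQn p 4) := by
    intro v hv
    have hv0 : v ≠ 0 := (Finset.mem_erase.1 hv).1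
    refine IntegrableOn.congr_fun (integrableOn_const (hfin v).ne enorm_ne_top)
      (fun x hx => (hval v hv0 x hx).symm) (hms v hv)
  rw [integral_biUnion_finset _ hms hd hint]
  -- each piece
  have hterm : ∀ v ∈ Finset.univ.erase (0 : Fin 4 → ZMod p),
      ∫ x in coset p v, ((‖Qf p a x‖ : ℂ) ^ (α - 2)) ∂(haarQn p 4)
        = ((((p : ℝ) ^ 4)⁻¹ : ℝ)) • (if v 0 = 0 ∧ v 1 = 0 then q else 1) := by
    intro v hv
    have hv0 : v ≠ 0 := (Finset.mem_erase.1 hv).1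
    rw [setIntegral_congr_fun (hms v hv) (fun x hx => hval v hv0 x hx), setIntegral_const]
    congr 1
    rw [measureReal_def, measure_coset, ENNReal.toReal_inv, ENNReal.toReal_pow]
    simp
  rw [Finset.sum_congr rfl hterm, ← Finset.smul_sum]
  -- evaluate the finite sum
  set f : (Fin 4 → ZMod p) → ℂ := fun v => if v 0 = 0 ∧ v 1 = 0 then q else 1 with hf
  have hf0 : f 0 = q := by simp [hf]
  have herase : ∑ v ∈ Finset.univ.erase (0 : Fin 4 → ZMod p), f v
      = (∑ v : Fin 4 → ZMod p, f v) - q := by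
    have := Finset.sum_erase_add Finset.univ f (Finset.mem_univ (0 : Fin 4 → ZMod p))
    rw [hf0] at this
    exact eq_sub_of_add_eq this
  have hcard1 : (Finset.univ.filter (fun v : Fin 4 → ZMod p => v 0 = 0 ∧ v 1 = 0)).card
      = p ^ 2 := by
    rw [← Fintype.card_subtype]
    have e : {v : Fin 4 → ZMod p // v 0 = 0 ∧ v 1 = 0} ≃ (ZMod p × ZMod p) :=
      { toFun := fun v => (v.1 2, v.1 3)
        invFun := fun c => ⟨![0, 0, c.1, c.2], ⟨rfl, rfl⟩⟩
        left_inv := by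
          rintro ⟨v, h0, h1⟩
          apply Subtype.ext
          funext i
          fin_cases i <;> simp [h0, h1]
        right_inv := fun c => rfl }
    rw [Fintype.card_congr e, Fintype.card_prod, ZMod.card]
    ring
  have hcardU : Fintype.card (Fin 4 → ZMod p) = p ^ 4 := by
    rw [Fintype.card_fun, ZMod.card, Fintype.card_fin]
  have hcard2 : ((Finset.univ.filter (fun v : Fin 4 → ZMod p => ¬(v 0 = 0 ∧ v 1 = 0))).card : ℂ)
      = (p : ℂ) ^ 4 - (p : ℂ) ^ 2 := by
    have h := Finset.card_filter_add_card_filter_not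
      (s := (Finset.univ : Finset (Fin 4 → ZMod p))) (fun v => v 0 = 0 ∧ v 1 = 0)
    rw [Finset.card_univ, hcardU, hcard1] at h
    have h2 := congrArg (Nat.cast : ℕ → ℂ) h
    push_cast at h2
    linear_combination h2
  have hsumuniv : (∑ v : Fin 4 → ZMod p, f v)
      = ((p ^ 2 : ℕ) : ℂ) * q +
        ((Finset.univ.filter (fun v : Fin 4 → ZMod p => ¬(v 0 = 0 ∧ v 1 = 0))).card : ℂ) := by
    rw [hf, Finset.sum_ite, Finset.sum_const, Finset.sum_const, hcard1]
    simp [nsmul_eq_mul]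
  rw [herase, hsumuniv, hcard2]
  -- final algebra
  have hP0 : (p : ℂ) ≠ 0 := Nat.cast_ne_zero.2 (Fact.out : p.Prime).ne_zero
  have harg : ((p : ℂ)).arg ≠ Real.pi := by
    rw [show ((p : ℂ)) = (((p : ℝ)) : ℂ) by push_cast; rfl,
      Complex.arg_ofReal_of_nonneg (by positivity)]
    exact Real.pi_ne_zero.symm
  have hq_eq : q = (p : ℂ) ^ (-α) * (p : ℂ) ^ (2 : ℕ) := by
    rw [hq]
    have hcoe : ((((p : ℝ)⁻¹ : ℝ)) : ℂ) = ((p : ℂ))⁻¹ := by push_cast; rfl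
    rw [hcoe, Complex.inv_cpow _ _ harg, ← Complex.cpow_neg,
      show -(α - 2) = -α + 2 by ring, Complex.cpow_add _ _ hP0]
    congr 1
    rw [show (2 : ℂ) = ((2 : ℕ) : ℂ) by norm_num, Complex.cpow_natCast]
  have h2neg : (p : ℂ) ^ (-(2 : ℂ)) = ((p : ℂ) ^ (2 : ℕ))⁻¹ := by
    rw [Complex.cpow_neg, show (2 : ℂ) = ((2 : ℕ) : ℂ) by norm_num, Complex.cpow_natCast]
  rw [real_smul, hq_eq, h2neg]
  push_cast
  field_simp
  ring
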